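/- Non-commutative union bound: let σ be a positive semidefinite d × d matrix with Tr{σ} ≤ 1, and let Π₁, …, Π_N be d × d orthogonal projections (Hermitian idempotent matrices). Then Tr{σ} − Tr{Π_N ⋯ Π₁ σ Π₁ ⋯ Π_N} ≤ 2 √( Σ_{i=1}^N Tr{(I − Π_i) σ} ). -/

import Mathlib

open scoped ComplexOrder

noncomputable section

namespace NCUB

open Matrix

variable {d : ℕ}

/-- Embed matrices into a Euclidean (Hilbert–Schmidt) space. -/
def toE (X : Matrix (Fin d) (Fin d) ℂ) : EuclideanSpace ℂ (Fin d × Fin d) :=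
  WithLp.toLp 2 (fun p : Fin d × Fin d => X p.1 p.2)

lemma toE_sub (X Y : Matrix (Fin d) (Fin d) ℂ) : toE (X - Y) = toE X - toE Y := by
  ext p; simp [toE]

lemma inner_toE (X Y : Matrix (Fin d) (Fin d) ℂ) :
    (inner ℂ (toE X) (toE Y) : ℂ) = (Xᴴ * Y).trace := by
  simp only [toE, PiLp.inner_apply, RCLike.inner_apply, Matrix.trace, Matrix.diag,
    Matrix.mul_apply, Matrix.conjTranspose_apply, Fintype.sum_prod_type]
  rw [Finset.sum_comm]
  exact Finset.sum_congr rfl fun _ _ => Finset.sum_congr rfl fun _ _ => mul_comm _ _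

lemma normSq_toE (X : Matrix (Fin d) (Fin d) ℂ) :
    ‖toE X‖^2 = ((Xᴴ * X).trace).re := by
  rw [← inner_toE, ← @inner_self_eq_norm_sq ℂ]
  rfl

lemma norm_toE_mul_le (Q B : Matrix (Fin d) (Fin d) ℂ) (hH : Qᴴ = Q) (h2 : Q * Q = Q) :
    ‖toE (Q * B)‖ ≤ ‖toE B‖ := by
  have e : ((Q * B)ᴴ * (Q * B)).trace = (Bᴴ * (Q * B)).trace := by
    rw [conjTranspose_mul, hH, mul_assoc, ← mul_assoc Q, h2]
  have h : ‖toE (Q * B)‖^2 ≤ ‖toE B‖ * ‖toE (Q * B)‖ := by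
    calc ‖toE (Q * B)‖^2 = ((Q*B)ᴴ*(Q*B)).trace.re := normSq_toE _
      _ = (inner ℂ (toE B) (toE (Q*B)) : ℂ).re := by rw [e, inner_toE]
      _ ≤ ‖(inner ℂ (toE B) (toE (Q*B)) : ℂ)‖ := Complex.re_le_norm _
      _ ≤ ‖toE B‖ * ‖toE (Q*B)‖ := norm_inner_le_norm _ _
  nlinarith [norm_nonneg (toE (Q*B)), norm_nonneg (toE B)]

lemma prod_rev_conjT {N : ℕ} (P : Fin N → Matrix (Fin d) (Fin d) ℂ)
    (hP : ∀ i, (P i)ᴴ = P i) (l : List (Fin N)) :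
    ((l.reverse.map P).prod)ᴴ = (l.map P).prod := by
  induction l with
  | nil => simp
  | cons i l ih =>
    rw [List.reverse_cons, List.map_append, List.prod_append, conjTranspose_mul]
    simp only [List.map_cons, List.map_nil, List.prod_cons, List.prod_nil, mul_one,
      conjTranspose_mul, ih, hP i, List.prod_singleton]

lemma key_bound {N : ℕ} (P : Fin N → Matrix (Fin d) (Fin d) ℂ)
    (hP : ∀ i, (P i)ᴴ = P i) (hP2 : ∀ i, P i * P i = P i)
    (A : Matrix (Fin d) (Fin d) ℂ) (l : List (Fin N)) :
    ‖toE (A - (l.reverse.map P).prod * A)‖^2 ≤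
      (l.map (fun i => ‖toE ((1 - P i) * A)‖^2)).sum := by
  induction l using List.reverseRecOn with
  | nil =>
    simp only [List.reverse_nil, List.map_nil, List.prod_nil, one_mul, sub_self, List.sum_nil]
    rw [show toE (0 : Matrix (Fin d) (Fin d) ℂ) = 0 from by ext p; simp [toE]]
    simp
  | append_singleton l j ih =>
    set Q := (l.reverse.map P).prod with hQ
    have hrev : ((l ++ [j]).reverse.map P).prod = P j * Q := by
      simp [List.reverse_append, hQ]
    have hdecomp : A - (P j * Q) * A = (1 - P j) * A + P j * (A - Q * A) := by
      noncomm_ring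
    have hx : toE (A - (P j * Q) * A)
        = toE ((1 - P j) * A) + toE (P j * (A - Q * A)) := by
      rw [hdecomp]; ext p; simp [toE]
    have hinner : (inner ℂ (toE ((1 - P j) * A)) (toE (P j * (A - Q * A))) : ℂ) = 0 := by
      rw [inner_toE]
      have : ((1 - P j) * A)ᴴ * (P j * (A - Q * A)) = 0 := by
        have h1 : ((1 - P j) * A)ᴴ = Aᴴ * (1 - P j) := by
          rw [conjTranspose_mul, conjTranspose_sub, conjTranspose_one, hP j]
        have h0 : (1 - P j) * P j = 0 := by
          rw [sub_mul, one_mul, hP2 j, sub_self]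
        rw [h1, mul_assoc, ← mul_assoc (1 - P j), h0, zero_mul, mul_zero]
      rw [this, Matrix.trace_zero]
    have hpyth : ‖toE (A - (P j * Q) * A)‖^2
        = ‖toE ((1 - P j) * A)‖^2 + ‖toE (P j * (A - Q * A))‖^2 := by
      rw [hx, @norm_add_sq ℂ, hinner]
      simp
    have hcontr : ‖toE (P j * (A - Q * A))‖^2 ≤ ‖toE (A - Q * A)‖^2 := by
      have := norm_toE_mul_le (P j) (A - Q * A) (hP j) (hP2 j)
      exact pow_le_pow_left₀ (norm_nonneg _) this 2
    rw [hrev, hpyth]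
    simp only [List.map_append, List.sum_append, List.map_cons, List.map_nil,
      List.sum_cons, List.sum_nil]
    linarith

end NCUB

open Matrix NCUB in
/-- **Non-commutative union bound (Sen)**: for a subnormalized state `σ ≥ 0`,
`Tr σ ≤ 1`, and orthogonal projections `Π₁, …, Π_N`,
`Tr{σ} − Tr{Π_N ⋯ Π₁ σ Π₁ ⋯ Π_N} ≤ 2√(Σᵢ Tr{(I − Πᵢ)σ})`. -/
theorem noncommutative_union_bound {d N : ℕ}
    (σ : Matrix (Fin d) (Fin d) ℂ) (hσ : σ.PosSemidef) (hσtr : (σ.trace).re ≤ 1)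
    (P : Fin N → Matrix (Fin d) (Fin d) ℂ)
    (hP : ∀ i, (P i).IsHermitian) (hP2 : ∀ i, P i * P i = P i) :
    (σ.trace).re -
      (((((List.finRange N).reverse.map P).prod) * σ *
          (((List.finRange N).map P).prod)).trace).re ≤
    2 * Real.sqrt (∑ i, (((1 - P i) * σ).trace).re) := by
  have hPH : ∀ i, (P i)ᴴ = P i := hP
  open scoped MatrixOrder in
  set A := CFC.sqrt σ with hAdef
  open scoped MatrixOrder in
  have hA : Aᴴ = A := (CFC.sqrt_nonneg σ).posSemidef.1
  open scoped MatrixOrder in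
  have hAA : A * A = σ := CFC.sqrt_mul_sqrt_self σ hσ.nonneg
  set Q : Matrix (Fin d) (Fin d) ℂ := ((List.finRange N).reverse.map P).prod with hQdef
  have hQ2 : ((List.finRange N).map P).prod = Qᴴ :=
    (prod_rev_conjT P hPH (List.finRange N)).symm
  set a := toE A with hadef
  set b := toE (Q * A) with hbdef
  -- trace identities
  have t1 : (σ.trace).re = ‖a‖^2 := by
    rw [hadef, normSq_toE, hA, hAA]
  have e : Q * σ * Qᴴ = (Q * A) * (Q * A)ᴴ := by
    rw [conjTranspose_mul, hA, ← hAA]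
    noncomm_ring
  have t2 : ((Q * σ * Qᴴ).trace).re = ‖b‖^2 := by
    rw [hbdef, normSq_toE, e, Matrix.trace_mul_comm]
  have t3 : ∀ i, (((1 - P i) * σ).trace).re = ‖toE ((1 - P i) * A)‖^2 := by
    intro i
    have hH : (1 - P i)ᴴ = 1 - P i := by
      rw [conjTranspose_sub, conjTranspose_one, hPH i]
    have hid : (1 - P i) * (1 - P i) = 1 - P i := by
      rw [mul_sub, mul_one, sub_mul, one_mul, hP2 i]
      abel
    have e2 : ((1 - P i) * A)ᴴ * ((1 - P i) * A) = A * ((1 - P i) * A) := by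
      rw [conjTranspose_mul, hH, hA, mul_assoc, ← mul_assoc (1 - P i), hid]
    have e3 : (A * ((1 - P i) * A)).trace = ((1 - P i) * σ).trace := by
      rw [Matrix.trace_mul_comm, mul_assoc, hAA]
    rw [normSq_toE, e2, e3]
  set S := ∑ i, (((1 - P i) * σ).trace).re with hSdef
  have hsum : S = ((List.finRange N).map (fun i => ‖toE ((1 - P i) * A)‖^2)).sum := by
    rw [hSdef]
    simp only [t3]
    exact Fin.sum_univ_def _
  have hkey := key_bound P hPH hP2 A (List.finRange N)
  rw [toE_sub] at hkey
  have hD2 : ‖a - b‖^2 ≤ S := by rw [hsum]; exact hkey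
  have hS0 : (0:ℝ) ≤ S := le_trans (sq_nonneg _) hD2
  have hDsqrt : ‖a - b‖ ≤ Real.sqrt S := by
    exact (Real.le_sqrt (norm_nonneg _) hS0).2 hD2
  have hns := @norm_sub_sq ℂ _ _ _ _ a b
  have h3 : RCLike.re (inner ℂ a (a - b) : ℂ) = ‖a‖^2 - RCLike.re (inner ℂ a b : ℂ) := by
    rw [inner_sub_right, map_sub, @inner_self_eq_norm_sq ℂ]
  have h4 : RCLike.re (inner ℂ a (a - b) : ℂ) ≤ ‖a‖ * ‖a - b‖ :=
    le_trans (RCLike.re_le_norm _) (norm_inner_le_norm a (a - b))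
  have hn1 : ‖a‖ ≤ 1 := by nlinarith [norm_nonneg a, t1]
  rw [hQ2, t1, t2]
  nlinarith [hns, h3, h4, hDsqrt, hn1, norm_nonneg a, norm_nonneg (a - b),
    Real.sqrt_nonneg S, sq_nonneg (‖a - b‖),
    mul_nonneg (sub_nonneg.2 hn1) (norm_nonneg (a - b))]
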